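/- Let α be a root of unity in ℂ with (α−1)² ∈ n·ℤ̄ for some integer n ≥ 5. Then α = 1. -/

import Mathlib

open IntermediateField

theorem stmt_17 (n : ℕ) (hn : 5 ≤ n) (α : ℂ) (hord : ∃ k : ℕ, 1 ≤ k ∧ α ^ k = 1)
    (h : ∃ β : ℂ, IsIntegral ℤ β ∧ (α - 1) ^ 2 = (n : ℂ) * β) :
    α = 1 := by
  obtain ⟨k, hk1, hk⟩ := hord
  obtain ⟨β, hβint, hβ⟩ := h
  have hn0 : (n : ℂ) ≠ 0 := Nat.cast_ne_zero.mpr (by omega)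
  -- α is integral over ℚ
  have hαint : IsIntegral ℚ α := by
    refine ⟨Polynomial.X ^ k - 1, ?_, ?_⟩
    · apply Polynomial.monic_X_pow_sub_C _ (by omega)
    · simp [hk]
  set K := ℚ⟮α⟯
  haveI : FiniteDimensional ℚ K := IntermediateField.adjoin.finiteDimensional hαint
  set a : K := IntermediateField.AdjoinSimple.gen ℚ α with ha
  have hacoe : (a : ℂ) = α := rfl
  set b : K := (a - 1) ^ 2 / (n : K) with hb
  have hbcoe : (b : ℂ) = β := by
    rw [show ((b : ℂ)) = algebraMap K ℂ b from rfl, hb, map_div₀, map_pow, map_sub, map_one,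
      map_natCast, show algebraMap K ℂ a = α from rfl, hβ]
    rw [mul_comm, mul_div_assoc, div_self hn0, mul_one]
  -- b is integral over ℤ
  have hbint : IsIntegral ℤ b := by
    have hinj : Function.Injective (algebraMap K ℂ) := (algebraMap K ℂ).injective
    rw [← isIntegral_algebraMap_iff hinj]
    have : (algebraMap K ℂ) b = β := hbcoe
    rw [this]
    exact hβint
  -- norm of b
  set N : ℚ := Algebra.norm ℚ b with hN
  have hNint : IsIntegral ℤ N := Algebra.isIntegral_norm ℚ hbint
  obtain ⟨z, hz⟩ := IsIntegrallyClosed.isIntegral_iff.mp hNint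
  have hprod : (algebraMap ℚ ℂ N) = ∏ σ : K →ₐ[ℚ] ℂ, σ b :=
    Algebra.norm_eq_prod_embeddings ℚ ℂ b
  -- each embedding has small absolute value
  have hbound : ∀ σ : K →ₐ[ℚ] ℂ, ‖σ b‖ ≤ 4 / 5 := by
    intro σ
    have hσa : ‖σ a‖ = 1 := by
      apply Complex.norm_eq_one_of_pow_eq_one (n := k) _ (by omega)
      rw [← map_pow]
      have : a ^ k = 1 := by
        apply Subtype.ext
        push_cast [hacoe]
        exact hk
      rw [this, map_one]
    have hσb : σ b = (σ a - 1) ^ 2 / (n : ℂ) := by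
      rw [hb]
      rw [map_div₀, map_pow, map_sub, map_one]
      norm_num
    rw [hσb]
    rw [norm_div, norm_pow]
    have h1 : ‖σ a - 1‖ ≤ 2 := by
      calc ‖σ a - 1‖ ≤ ‖σ a‖ + ‖(1:ℂ)‖ := norm_sub_le _ _
      _ = 2 := by rw [hσa]; norm_num
    have h2 : ‖(n:ℂ)‖ = (n : ℝ) := by
      simp
    rw [h2]
    have hn5 : (5:ℝ) ≤ (n:ℝ) := by exact_mod_cast hn
    rw [div_le_div_iff₀ (by linarith) (by norm_num)]
    nlinarith [norm_nonneg (σ a - 1)]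
  -- deduce |N| < 1
  have hcard : 0 < Fintype.card (K →ₐ[ℚ] ℂ) := Fintype.card_pos_iff.mpr ⟨IsAlgClosed.lift⟩
  have hprodle : ‖(algebraMap ℚ ℂ N)‖ ≤ (4/5 : ℝ) ^ Fintype.card (K →ₐ[ℚ] ℂ) := by
    rw [hprod]
    calc ‖∏ σ : K →ₐ[ℚ] ℂ, σ b‖ = ∏ σ : K →ₐ[ℚ] ℂ, ‖σ b‖ := by
          rw [norm_prod]
      _ ≤ ∏ _σ : K →ₐ[ℚ] ℂ, (4/5 : ℝ) := by
          apply Finset.prod_le_prod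
          · intro i _; exact norm_nonneg _
          · intro i _; exact hbound i
      _ = (4/5 : ℝ) ^ Fintype.card (K →ₐ[ℚ] ℂ) := by
          rw [Finset.prod_const, Finset.card_univ]
  have hlt : ‖(algebraMap ℚ ℂ N)‖ < 1 :=
    lt_of_le_of_lt hprodle (pow_lt_one₀ (by norm_num) (by norm_num) (by omega))
  have hNabs : |N| < 1 := by
    have : ‖(algebraMap ℚ ℂ N)‖ = |(N : ℝ)| := by
      rw [show (algebraMap ℚ ℂ N) = ((N : ℝ) : ℂ) by push_cast; rfl, Complex.norm_real,
        Real.norm_eq_abs]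
    rw [this] at hlt
    exact_mod_cast hlt
  have hNzero : N = 0 := by
    rw [← hz] at hNabs ⊢
    have : |z| < 1 := by
      have := hNabs
      rw [show (algebraMap ℤ ℚ z : ℚ) = (z : ℚ) by simp] at this
      exact_mod_cast (by push_cast at this ⊢; exact this : |(z:ℚ)| < 1)
    have : z = 0 := Int.abs_lt_one_iff.mp this
    simp [this]
  have hb0 : b = 0 := by
    rwa [hN, Algebra.norm_eq_zero_iff] at hNzero
  have : β = 0 := by rw [← hbcoe, hb0]; simp
  rw [this, mul_zero, pow_eq_zero_iff (by norm_num), sub_eq_zero] at hβ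
  exact hβ
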